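/- Let X be a real-valued random variable with E[X] = 0, E[X^2] = 1, and let f : ℝ → ℝ be continuously differentiable with bounded derivative. Then E[X f(X)] = ∫_ℝ f'(t) · E[X · 1{X > t}] dt. -/

import Mathlib

open MeasureTheory

lemma helperA (g : ℝ → ℝ) (x : ℝ) :
    ∫ t, g t * (x * ((Set.Ioo 0 x).indicator 1 t - (Set.Ico x 0).indicator 1 t))
      = x * ∫ t in (0:ℝ)..x, g t := by
  rcases le_or_gt 0 x with hx | hx
  · have hIco : Set.Ico x 0 = ∅ := Set.Ico_eq_empty (by simp; linarith)
    have h1 : (fun t => g t * (x * ((Set.Ioo 0 x).indicator 1 t - (Set.Ico x 0).indicator 1 t)))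
        = (Set.Ioo 0 x).indicator (fun t => g t * x) := by
      funext t
      by_cases ht : t ∈ Set.Ioo 0 x <;>
        simp [hIco, Set.indicator_of_mem, Set.indicator_of_notMem, ht]
    rw [h1, MeasureTheory.integral_indicator measurableSet_Ioo]
    rw [← MeasureTheory.integral_Ioc_eq_integral_Ioo, ← intervalIntegral.integral_of_le hx]
    rw [intervalIntegral.integral_mul_const]
    ring
  · have hIoo : Set.Ioo 0 x = ∅ := Set.Ioo_eq_empty (by linarith)
    have h1 : (fun t => g t * (x * ((Set.Ioo 0 x).indicator 1 t - (Set.Ico x 0).indicator 1 t)))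
        = fun t => -((Set.Ico x 0).indicator (fun t => g t * x) t) := by
      funext t
      by_cases ht : t ∈ Set.Ico x 0
      · simp [hIoo, Set.indicator_of_mem, Set.indicator_of_notMem, ht]
      · simp [hIoo, Set.indicator_of_mem, Set.indicator_of_notMem, ht]
    rw [h1, MeasureTheory.integral_neg, MeasureTheory.integral_indicator measurableSet_Ico]
    rw [MeasureTheory.integral_Ico_eq_integral_Ioo, ← MeasureTheory.integral_Ioc_eq_integral_Ioo]
    rw [intervalIntegral.integral_of_ge (le_of_lt hx)]
    rw [MeasureTheory.integral_mul_const x g]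
    ring

theorem stmt_7 {Ω : Type*} [MeasurableSpace Ω] (μ : Measure Ω) [IsProbabilityMeasure μ]
    (X : Ω → ℝ) (hXmeas : Measurable X)
    (hX1 : Integrable X μ) (hX2 : Integrable (fun ω => (X ω) ^ 2) μ)
    (hmean : ∫ ω, X ω ∂μ = 0) (hvar : ∫ ω, (X ω) ^ 2 ∂μ = 1)
    (f : ℝ → ℝ) (hf : ContDiff ℝ 1 f) (C : ℝ) (hC : ∀ t, |deriv f t| ≤ C) :
    ∫ ω, X ω * f (X ω) ∂μ
      = ∫ t : ℝ, deriv f t * (∫ ω, (if t < X ω then X ω else 0) ∂μ) := by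
  set g := deriv f with hgdef
  have hgc : Continuous g := hf.continuous_deriv le_rfl
  have hC0 : 0 ≤ C := le_trans (abs_nonneg _) (hC 0)
  set F : Ω → ℝ → ℝ := fun ω t =>
    g t * (X ω * ((Set.Ioo 0 (X ω)).indicator 1 t - (Set.Ico (X ω) 0).indicator 1 t)) with hFdef
  -- measurability of uncurry F
  have hFm : Measurable (Function.uncurry F) := by
    apply Measurable.mul (hgc.measurable.comp measurable_snd)
    apply Measurable.mul (hXmeas.comp measurable_fst)
    apply Measurable.sub
    · have h1 : (fun p : Ω × ℝ => (Set.Ioo 0 (X p.1)).indicator (1 : ℝ → ℝ) p.2)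
          = Set.indicator {p : Ω × ℝ | 0 < p.2 ∧ p.2 < X p.1} (fun _ => (1:ℝ)) := by
        funext p
        by_cases h : 0 < p.2 ∧ p.2 < X p.1 <;>
          simp [Set.indicator, Set.mem_Ioo, h]
      rw [h1]
      exact measurable_const.indicator
        ((measurableSet_lt measurable_const measurable_snd).inter
          (measurableSet_lt measurable_snd (hXmeas.comp measurable_fst)))
    · have h1 : (fun p : Ω × ℝ => (Set.Ico (X p.1) 0).indicator (1 : ℝ → ℝ) p.2)
          = Set.indicator {p : Ω × ℝ | X p.1 ≤ p.2 ∧ p.2 < 0} (fun _ => (1:ℝ)) := by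
        funext p
        by_cases h : X p.1 ≤ p.2 ∧ p.2 < 0 <;>
          simp [Set.indicator, Set.mem_Ico, h]
      rw [h1]
      exact measurable_const.indicator
        ((measurableSet_le (hXmeas.comp measurable_fst) measurable_snd).inter
          (measurableSet_lt measurable_snd measurable_const))
  have hFsm : ∀ ω, Measurable (F ω) := fun ω => hFm.comp (measurable_prodMk_left)
  -- Step A: FTC
  have hA : ∀ ω, ∫ t, F ω t = X ω * (f (X ω) - f 0) := by
    intro ω
    have hftc : ∫ t in (0:ℝ)..(X ω), g t = f (X ω) - f 0 :=
      intervalIntegral.integral_deriv_eq_sub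
        (fun t _ => (hf.differentiable one_ne_zero).differentiableAt)
        (hgc.intervalIntegrable _ _)
    rw [show (fun t => F ω t) = fun t => g t * (X ω *
        ((Set.Ioo 0 (X ω)).indicator 1 t - (Set.Ico (X ω) 0).indicator 1 t)) from rfl,
      helperA g (X ω), hftc]
  -- bound
  set B : Ω → ℝ → ℝ := fun ω => (Set.Ioo 0 (X ω) ∪ Set.Ico (X ω) 0).indicator
      (fun _ => C * |X ω|) with hBdef
  have hBmeas : ∀ ω, MeasurableSet (Set.Ioo 0 (X ω) ∪ Set.Ico (X ω) 0) := fun ω =>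
    measurableSet_Ioo.union measurableSet_Ico
  have hBint : ∀ ω, Integrable (B ω) := by
    intro ω
    refine ((integrableOn_const_iff (C := C * |X ω|)).mpr (Or.inr ?_)).integrable_indicator (hBmeas ω)
    exact lt_of_le_of_lt (measure_union_le _ _)
      (by simp [Real.volume_Ioo, Real.volume_Ico])
  have hFbd : ∀ ω t, ‖F ω t‖ ≤ B ω t := by
    intro ω t
    have hind : |(Set.Ioo 0 (X ω)).indicator (1:ℝ→ℝ) t - (Set.Ico (X ω) 0).indicator 1 t|
        ≤ (Set.Ioo 0 (X ω) ∪ Set.Ico (X ω) 0).indicator (fun _ => (1:ℝ)) t := by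
      by_cases h1 : t ∈ Set.Ioo 0 (X ω) <;> by_cases h2 : t ∈ Set.Ico (X ω) 0 <;>
        simp [Set.indicator, h1, h2]
    have : ‖F ω t‖ ≤ C * (|X ω| * |(Set.Ioo 0 (X ω)).indicator (1:ℝ→ℝ) t -
        (Set.Ico (X ω) 0).indicator 1 t|) := by
      rw [hFdef]
      simp only [norm_mul, Real.norm_eq_abs]
      have := hC t
      gcongr
    refine this.trans ?_
    by_cases h : t ∈ Set.Ioo 0 (X ω) ∪ Set.Ico (X ω) 0
    · simp only [hBdef, Set.indicator_of_mem h] at hind ⊢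
      calc C * (|X ω| * _) ≤ C * (|X ω| * 1) := by gcongr
        _ = C * |X ω| := by ring
    · simp only [hBdef, Set.indicator_of_notMem h] at hind ⊢
      have h0 : |(Set.Ioo 0 (X ω)).indicator (1:ℝ→ℝ) t - (Set.Ico (X ω) 0).indicator 1 t| = 0 :=
        le_antisymm hind (abs_nonneg _)
      rw [h0]
      simp
  have hFsliceInt : ∀ ω, Integrable (F ω) := fun ω =>
    (hBint ω).mono' (hFsm ω).aestronglyMeasurable (Filter.Eventually.of_forall (hFbd ω))
  have hBval : ∀ ω, ∫ t, B ω t = C * (X ω)^2 := by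
    intro ω
    rw [hBdef]
    simp only []
    rw [MeasureTheory.integral_indicator (hBmeas ω), setIntegral_const]
    rcases le_or_gt 0 (X ω) with hx | hx
    · rw [Set.Ico_eq_empty (by simp; linarith), Set.union_empty]
      simp [Real.volume_Ioo, ENNReal.toReal_ofReal hx, abs_of_nonneg hx]
      rw [max_eq_left hx]
      ring
    · rw [Set.Ioo_eq_empty (by linarith), Set.empty_union]
      simp [Real.volume_Ico, abs_of_neg hx]
      rw [max_eq_left (by linarith : (0:ℝ) ≤ -X ω)]
      ring
  have hnormbd : ∀ ω, ∫ t, ‖F ω t‖ ≤ C * (X ω)^2 := by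
    intro ω
    rw [← hBval ω]
    exact integral_mono (hFsliceInt ω).norm (hBint ω) (hFbd ω)
  -- product integrability
  have hFint : Integrable (Function.uncurry F) (μ.prod volume) := by
    rw [MeasureTheory.integrable_prod_iff hFm.aestronglyMeasurable]
    constructor
    · exact Filter.Eventually.of_forall hFsliceInt
    · refine (hX2.const_mul C).mono'
        (hFm.aestronglyMeasurable.norm.integral_prod_right') ?_
      refine Filter.Eventually.of_forall fun ω => ?_
      rw [Real.norm_eq_abs, abs_of_nonneg (integral_nonneg fun t => norm_nonneg _)]
      exact hnormbd ω
  -- step B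
  have hQint : ∀ t : ℝ, Integrable (fun ω => if t < X ω then X ω else 0) μ := by
    intro t
    have : (fun ω => if t < X ω then X ω else 0) = (X ⁻¹' Set.Ioi t).indicator X := by
      funext ω; by_cases h : t < X ω <;> simp [Set.indicator, h]
    rw [this]
    exact hX1.indicator (hXmeas measurableSet_Ioi)
  have hPint : ∀ t : ℝ, Integrable (fun ω => if X ω ≤ t then X ω else 0) μ := by
    intro t
    have : (fun ω => if X ω ≤ t then X ω else 0) = (X ⁻¹' Set.Iic t).indicator X := by
      funext ω; by_cases h : X ω ≤ t <;> simp [Set.indicator, h]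
    rw [this]
    exact hX1.indicator (hXmeas measurableSet_Iic)
  have hB2 : ∀ᵐ t : ℝ, (∫ ω, F ω t ∂μ) = g t * ∫ ω, (if t < X ω then X ω else 0) ∂μ := by
    have h0 : ∀ᵐ t : ℝ, t ≠ 0 := by
      rw [ae_iff]
      simp [show {t : ℝ | ¬ t ≠ 0} = {0} from by ext t; simp]
    filter_upwards [h0] with t ht
    rcases lt_or_gt_of_ne ht with htneg | htpos
    · -- t < 0
      have hk : ∀ ω, F ω t = g t * (-(if X ω ≤ t then X ω else 0)) := by
        intro ω
        rw [hFdef]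
        simp only []
        have h1 : t ∉ Set.Ioo 0 (X ω) := by simp [Set.mem_Ioo]; intro h; linarith
        by_cases h2 : X ω ≤ t
        · have : t ∈ Set.Ico (X ω) 0 := ⟨h2, htneg⟩
          simp [Set.indicator_of_notMem h1, Set.indicator_of_mem this, h2]
        · have : t ∉ Set.Ico (X ω) 0 := by simp [Set.mem_Ico]; intro h; exact absurd h h2
          simp [Set.indicator_of_notMem h1, Set.indicator_of_notMem this, h2]
      have hsum : ∫ ω, (if X ω ≤ t then X ω else 0) ∂μ
          + ∫ ω, (if t < X ω then X ω else 0) ∂μ = 0 := by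
        have h1 : (fun ω => (if X ω ≤ t then X ω else 0) + (if t < X ω then X ω else 0)) = X := by
          funext ω
          by_cases h : X ω ≤ t
          · simp [h, not_lt.mpr h]
          · simp [h, not_le.mp h]
        rw [← integral_add (hPint t) (hQint t), h1, hmean]
      calc ∫ ω, F ω t ∂μ = ∫ ω, g t * (-(if X ω ≤ t then X ω else 0)) ∂μ := by
            exact integral_congr_ae (Filter.Eventually.of_forall hk)
        _ = g t * ∫ ω, (-(if X ω ≤ t then X ω else 0)) ∂μ := integral_const_mul _ _
        _ = g t * (- ∫ ω, (if X ω ≤ t then X ω else 0) ∂μ) := by rw [integral_neg]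
        _ = g t * ∫ ω, (if t < X ω then X ω else 0) ∂μ := by
            congr 1; linarith [hsum]
    · -- 0 < t
      have hk : ∀ ω, F ω t = g t * (if t < X ω then X ω else 0) := by
        intro ω
        rw [hFdef]
        simp only []
        have h2 : t ∉ Set.Ico (X ω) 0 := by simp [Set.mem_Ico]; intro h; linarith
        by_cases h1 : t < X ω
        · have : t ∈ Set.Ioo 0 (X ω) := ⟨htpos, h1⟩
          simp [Set.indicator_of_mem this, Set.indicator_of_notMem h2, h1]
        · have hnot : t ∉ Set.Ioo 0 (X ω) := fun h => h1 h.2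
          simp [Set.indicator_of_notMem hnot, Set.indicator_of_notMem h2, h1]
      rw [integral_congr_ae (Filter.Eventually.of_forall hk)]
      exact integral_const_mul _ _
  -- assemble
  have hmain : ∀ ω, X ω * f (X ω) = f 0 * X ω + ∫ t, F ω t := by
    intro ω; rw [hA ω]; ring
  calc ∫ ω, X ω * f (X ω) ∂μ
      = ∫ ω, (f 0 * X ω + ∫ t, F ω t) ∂μ :=
        integral_congr_ae (Filter.Eventually.of_forall hmain)
    _ = (∫ ω, f 0 * X ω ∂μ) + ∫ ω, (∫ t, F ω t) ∂μ :=
        integral_add (hX1.const_mul _) hFint.integral_prod_left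
    _ = ∫ ω, (∫ t, F ω t) ∂μ := by
        rw [integral_const_mul, hmean]; ring
    _ = ∫ t, ∫ ω, F ω t ∂μ := integral_integral_swap hFint
    _ = ∫ t : ℝ, deriv f t * (∫ ω, (if t < X ω then X ω else 0) ∂μ) :=
        integral_congr_ae hB2
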